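/- If X is a Valdivia compact space, then there exist a set S of cardinality at most the weight w(X) of X and a Valdivia embedding h : X → [0,1]^S. -/

import Mathlib

open Set Filter Topology

universe u

/-- `Σ(T)`: the points of the Tikhonov cube `[0,1]^T` with countable support. -/
def SigmaProd (T : Type*) : Set (T → unitInterval) :=
  {x | {t | x t ≠ 0}.Countable}

/-- A Valdivia embedding: a topological embedding `h : X → [0,1]^T` such that
`h(X)` is the closure of `h(X) ∩ Σ(T)`. -/
def IsValdiviaEmbedding {X : Type*} [TopologicalSpace X] {T : Type*}
    (h : X → T → unitInterval) : Prop :=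
  Topology.IsEmbedding h ∧ Set.range h = closure (Set.range h ∩ SigmaProd T)

/-- A space is Valdivia compact if it admits a Valdivia embedding into some cube. -/
def IsValdivia (X : Type u) [TopologicalSpace X] : Prop :=
  ∃ (T : Type u) (h : X → T → unitInterval), IsValdiviaEmbedding h

/-- The weight of a topological space: the least cardinality of a base. -/
noncomputable def tweight (X : Type u) [TopologicalSpace X] : Cardinal.{u} :=
  sInf {c | ∃ B : Set (Set X), TopologicalSpace.IsTopologicalBasis B ∧ Cardinal.mk ↥B = c}



lemma sigma_restrict {T : Type*} (S : Set T) {f : T → unitInterval} (hf : f ∈ SigmaProd T) :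
    (fun s : S => f s) ∈ SigmaProd S :=
  Set.Countable.preimage hf Subtype.coe_injective

lemma range_restrict_valdivia {X : Type*} [TopologicalSpace X] [CompactSpace X]
    {T : Type*} {h : X → T → unitInterval} (hc : Continuous h)
    (hr : Set.range h = closure (Set.range h ∩ SigmaProd T)) (S : Set T) :
    Set.range (fun x (s : S) => h x s) =
      closure (Set.range (fun x (s : S) => h x s) ∩ SigmaProd S) := by
  set π : (T → unitInterval) → (S → unitInterval) := fun f s => f s with hπ
  have hπc : Continuous π := continuous_pi fun s => continuous_apply _
  have hc' : Continuous (fun x (s : S) => h x ↑s) := hπc.comp hc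
  have hclosed : IsClosed (Set.range (fun x (s : S) => h x ↑s)) :=
    (isCompact_range hc').isClosed
  apply Set.Subset.antisymm
  · calc Set.range (fun x (s : S) => h x ↑s) = π '' Set.range h := Set.range_comp π h
    _ = π '' closure (Set.range h ∩ SigmaProd T) := by rw [← hr]
    _ ⊆ closure (π '' (Set.range h ∩ SigmaProd T)) := image_closure_subset_closure_image hπc
    _ ⊆ closure (Set.range (fun x (s : S) => h x ↑s) ∩ SigmaProd S) := by
        apply closure_mono
        rintro _ ⟨f, ⟨⟨x, rfl⟩, hfS⟩, rfl⟩
        exact ⟨⟨x, rfl⟩, sigma_restrict S hfS⟩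
  · exact closure_minimal inter_subset_left hclosed

lemma exists_finite_sep {X : Type*} [TopologicalSpace X] {T : Type*}
    {h : X → T → unitInterval} (hc : Continuous h) {K L : Set X}
    (hK : IsCompact K) (hL : IsCompact L)
    (hs : ∀ x ∈ K, ∀ y ∈ L, h x ≠ h y) :
    ∃ F : Set T, F.Finite ∧ ∀ x ∈ K, ∀ y ∈ L, ∃ t ∈ F, h x t ≠ h y t := by
  set W : T → Set (X × X) := fun t => {p | h p.1 t ≠ h p.2 t} with hW
  have hWo : ∀ t, IsOpen (W t) := fun t =>
    isOpen_ne_fun (((continuous_apply t).comp hc).comp continuous_fst)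
      (((continuous_apply t).comp hc).comp continuous_snd)
  have hcover : K ×ˢ L ⊆ ⋃ t, W t := by
    rintro ⟨x, y⟩ ⟨hx, hy⟩
    obtain ⟨t, ht⟩ := Function.ne_iff.mp (hs x hx y hy)
    exact mem_iUnion.mpr ⟨t, ht⟩
  obtain ⟨F, hF⟩ := (hK.prod hL).elim_finite_subcover W hWo hcover
  refine ⟨↑F, F.finite_toSet, fun x hx y hy => ?_⟩
  obtain ⟨t, htF, ht⟩ := Set.mem_iUnion₂.mp (hF (Set.mk_mem_prod hx hy))
  exact ⟨t, htF, ht⟩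

lemma exists_basis_tweight (X : Type u) [TopologicalSpace X] :
    ∃ B : Set (Set X), TopologicalSpace.IsTopologicalBasis B ∧ Cardinal.mk ↥B = tweight X := by
  have hne : {c | ∃ B : Set (Set X), TopologicalSpace.IsTopologicalBasis B ∧
      Cardinal.mk ↥B = c}.Nonempty :=
    ⟨_, {U | IsOpen U}, TopologicalSpace.isTopologicalBasis_opens, rfl⟩
  exact csInf_mem hne

lemma basis_finite_of_finite {X : Type u} [TopologicalSpace X] [T1Space X]
    {B : Set (Set X)} (hB : TopologicalSpace.IsTopologicalBasis B) (hfin : Finite ↥B) :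
    Finite X := by
  have hinj : Function.Injective (fun x : X => {b : ↥B | x ∈ (b : Set X)}) := by
    intro x y hxy
    by_contra hne
    obtain ⟨b, hbB, hxb, hby⟩ := hB.exists_subset_of_mem_open
      (show x ∈ ({y}ᶜ : Set X) from hne) (isOpen_compl_singleton)
    have hxy' : {b : ↥B | x ∈ (b : Set X)} = {b : ↥B | y ∈ (b : Set X)} := hxy
    have hmem : y ∈ b := by
      have h1 : (⟨b, hbB⟩ : ↥B) ∈ {b : ↥B | x ∈ (b : Set X)} := hxb
      rw [hxy'] at h1
      exact h1
    exact hby hmem rfl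
  exact Finite.of_injective _ hinj

noncomputable def natToI : ℕ → unitInterval := fun n =>
  ⟨1 / (n + 1), by positivity, by
    rw [div_le_one (by positivity)]
    have : (0:ℝ) ≤ n := n.cast_nonneg
    linarith⟩

lemma natToI_injective : Function.Injective natToI := by
  intro a b hab
  have h1 : (1:ℝ) / (a + 1) = 1 / (b + 1) := congrArg (fun x : unitInterval => (x:ℝ)) hab
  have ha : (a:ℝ) + 1 ≠ 0 := by positivity
  have hb : (b:ℝ) + 1 ≠ 0 := by positivity
  field_simp at h1
  exact_mod_cast (by linarith : (a:ℝ) = b)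

/-- every Valdivia compact space `X` admits a Valdivia embedding into a
cube `[0,1]^S` with `|S| ≤ w(X)`. -/
theorem statement3 {X : Type u} [TopologicalSpace X] [CompactSpace X] [T2Space X]
    (hX : IsValdivia X) :
    ∃ (S : Type u) (h : X → S → unitInterval),
      Cardinal.mk S ≤ tweight X ∧ IsValdiviaEmbedding h := by
  obtain ⟨T, h, hemb, hrange⟩ := hX
  obtain ⟨B, hB, hBcard⟩ := exists_basis_tweight X
  by_cases hXfin : Finite X
  · -- finite case
    by_cases hXe : IsEmpty X
    · -- empty: restrict to ∅ ⊆ T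
      refine ⟨↥(∅ : Set T), fun x (s : (∅ : Set T)) => h x s, ?_, ?_, ?_⟩
      · simp
      · exact (Continuous.isClosedEmbedding
          (continuous_pi fun s => (continuous_apply _).comp hemb.continuous)
          (fun x => hXe.elim x)).isEmbedding
      · exact range_restrict_valdivia hemb.continuous hrange _
    · -- nonempty finite: X is discrete, embed into one coordinate
      have : Nonempty X := not_isEmpty_iff.mp hXe
      have hdisc : DiscreteTopology X := by infer_instance
      obtain ⟨f, hf⟩ := Countable.exists_injective_nat X
      refine ⟨PUnit.{u+1}, fun x _ => natToI (f x), ?_, ?_, ?_⟩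
      · -- 1 ≤ tweight X
        obtain ⟨x⟩ := ‹Nonempty X›
        have hx : x ∈ ⋃₀ B := by rw [hB.sUnion_eq]; trivial
        obtain ⟨b, hbB, -⟩ := hx
        have h1 : (1 : Cardinal.{u}) ≤ Cardinal.mk ↥B :=
          Cardinal.one_le_iff_ne_zero.mpr (Cardinal.mk_ne_zero_iff.mpr ⟨⟨b, hbB⟩⟩)
        rw [hBcard] at h1
        simpa using h1
      · exact (Continuous.isClosedEmbedding (continuous_of_discreteTopology)
          (fun x y hxy => hf (natToI_injective (congrFun hxy PUnit.unit)))).isEmbedding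
      · have hcl : IsClosed (Set.range fun x (_ : PUnit) => natToI (f x)) :=
          (isCompact_range continuous_of_discreteTopology).isClosed
        have heq : Set.range (fun x (_ : PUnit) => natToI (f x)) ∩ SigmaProd PUnit
            = Set.range (fun x (_ : PUnit) => natToI (f x)) := by
          apply inter_eq_self_of_subset_left
          intro g _
          exact Set.Countable.mono (Set.subset_univ _) (Set.countable_univ)
        rw [heq, hcl.closure_eq]
  · -- infinite case
    have hXinf : Infinite X := not_finite_iff_infinite.mp hXfin
    have hBinf : Cardinal.aleph0 ≤ Cardinal.mk ↥B := by
      by_contra hlt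
      push_neg at hlt
      have : Finite ↥B := Cardinal.lt_aleph0_iff_finite.mp hlt
      exact hXfin (basis_finite_of_finite hB this)
    -- for each pair of basic sets, choose a finite separating set of coordinates
    have key : ∀ p : ↥B × ↥B, ∃ F : Set T, F.Finite ∧
        (Disjoint (closure (p.1 : Set X)) (closure (p.2 : Set X)) →
          ∀ x ∈ closure (p.1 : Set X), ∀ y ∈ closure (p.2 : Set X),
            ∃ t ∈ F, h x t ≠ h y t) := by
      rintro ⟨⟨U, hU⟩, ⟨V, hV⟩⟩
      by_cases hd : Disjoint (closure U) (closure V)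
      · obtain ⟨F, hFfin, hFsep⟩ := exists_finite_sep hemb.continuous
          (isClosed_closure.isCompact : IsCompact (closure U))
          (isClosed_closure.isCompact : IsCompact (closure V))
          (fun x hx y hy hxy => hd.ne_of_mem hx hy (hemb.injective hxy))
        exact ⟨F, hFfin, fun _ => hFsep⟩
      · exact ⟨∅, Set.finite_empty, fun hd' => absurd hd' hd⟩
    choose F hFfin hFsep using key
    set Sset : Set T := ⋃ p : ↥B × ↥B, F p with hSset
    -- cardinality bound
    have hcard : Cardinal.mk ↥Sset ≤ tweight X := by
      calc Cardinal.mk ↥Sset ≤ Cardinal.mk (↥B × ↥B) * ⨆ p, Cardinal.mk ↥(F p) :=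
            Cardinal.mk_iUnion_le F
      _ ≤ Cardinal.mk (↥B × ↥B) * Cardinal.aleph0 := by
            apply mul_le_mul_right
            exact ciSup_le' fun p => (hFfin p).lt_aleph0.le
      _ = (Cardinal.mk ↥B * Cardinal.mk ↥B) * Cardinal.aleph0 := by
            simp [Cardinal.mk_prod]
      _ = Cardinal.mk ↥B * Cardinal.aleph0 := by rw [Cardinal.mul_eq_self hBinf]
      _ = Cardinal.mk ↥B := by
            rw [Cardinal.mul_eq_max hBinf le_rfl, max_eq_left hBinf]
      _ = tweight X := hBcard
    -- separation of points
    have hsep : ∀ x y : X, x ≠ y → ∃ t ∈ Sset, h x t ≠ h y t := by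
      intro x y hxy
      obtain ⟨O1, O2, hO1, hO2, hxO1, hyO2, hO12⟩ := t2_separation hxy
      obtain ⟨C1, hC1n, hC1c, hC1s⟩ := exists_mem_nhds_isClosed_subset (hO1.mem_nhds hxO1)
      obtain ⟨C2, hC2n, hC2c, hC2s⟩ := exists_mem_nhds_isClosed_subset (hO2.mem_nhds hyO2)
      obtain ⟨U, hUB, hxU, hUs⟩ := hB.exists_subset_of_mem_open
        (mem_interior_iff_mem_nhds.mpr hC1n) isOpen_interior
      obtain ⟨V, hVB, hyV, hVs⟩ := hB.exists_subset_of_mem_open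
        (mem_interior_iff_mem_nhds.mpr hC2n) isOpen_interior
      have hclU : closure U ⊆ O1 :=
        (closure_minimal (hUs.trans interior_subset) hC1c).trans hC1s
      have hclV : closure V ⊆ O2 :=
        (closure_minimal (hVs.trans interior_subset) hC2c).trans hC2s
      have hd : Disjoint (closure U) (closure V) :=
        hO12.mono hclU hclV
      obtain ⟨t, htF, htne⟩ := hFsep ⟨⟨U, hUB⟩, ⟨V, hVB⟩⟩ hd x (subset_closure hxU)
        y (subset_closure hyV)
      exact ⟨t, Set.mem_iUnion.mpr ⟨⟨⟨U, hUB⟩, ⟨V, hVB⟩⟩, htF⟩, htne⟩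
    -- the restricted map
    have hinj : Function.Injective (fun x (s : Sset) => h x s) := by
      intro x y hxy
      by_contra hne
      obtain ⟨t, htS, htne⟩ := hsep x y hne
      exact htne (congrFun hxy ⟨t, htS⟩)
    refine ⟨↥Sset, fun x (s : Sset) => h x s, hcard, ?_, ?_⟩
    · exact (Continuous.isClosedEmbedding
        (continuous_pi fun s => (continuous_apply _).comp hemb.continuous) hinj).isEmbedding
    · exact range_restrict_valdivia hemb.continuous hrange Sset
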